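/- Let H be an n-vertex linear hypergraph and let t := e(H) − n. If e_1, …, e_{2t} ∈ E(H) are distinct pairwise intersecting edges such that {e_{2i−1}, e_{2i}} is a useful pair for each i ∈ [t], then H has a proper edge-colouring with n colours in which each colour is assigned to at most two edges. -/

import Mathlib

open Finset
open scoped Classical

/-- A hypergraph on vertex set `Fin n` is *linear* if any two distinct edges intersect in at
most one vertex. -/
def LinearHG {n : ℕ} (H : Finset (Finset (Fin n))) : Prop :=
  ∀ e ∈ H, ∀ f ∈ H, e ≠ f → (e ∩ f).card ≤ 1

/-- `φ` is a proper edge-colouring of the hypergraph `H`. -/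
def IsProperEC {n : ℕ} (H : Finset (Finset (Fin n))) (φ : Finset (Fin n) → ℕ) : Prop :=
  ∀ e ∈ H, ∀ f ∈ H, e ≠ f → (e ∩ f).Nonempty → φ e ≠ φ f

/-- Each colour is assigned to at most two edges of `H` by `φ`. -/
def ColoursUsedAtMostTwice {n : ℕ} (H : Finset (Finset (Fin n)))
    (φ : Finset (Fin n) → ℕ) : Prop :=
  ∀ c : ℕ, (H.filter fun e => φ e = c).card ≤ 2

/-- The set `N(e) ∩ N(f)` of edges of `H` intersecting both `e` and `f` (other than `e`, `f`
themselves). -/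
def CommonNbrs {n : ℕ} (H : Finset (Finset (Fin n))) (e f : Finset (Fin n)) :
    Finset (Finset (Fin n)) :=
  H.filter fun g => g ≠ e ∧ (g ∩ e).Nonempty ∧ g ≠ f ∧ (g ∩ f).Nonempty

/-- A pair of edges `{e, f}` of an `n`-vertex hypergraph is *useful* if `e ≠ f`,
`e ∩ f ≠ ∅`, and `|N(e) ∩ N(f)| ≤ n - 2`. -/
def Useful {n : ℕ} (H : Finset (Finset (Fin n))) (e f : Finset (Fin n)) : Prop :=
  e ≠ f ∧ (e ∩ f).Nonempty ∧ ((CommonNbrs H e f).card : ℤ) ≤ (n : ℤ) - 2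

lemma exists_injective_choice {α : Type*} [DecidableEq α] [Nonempty α]
    (t : ℕ) (C : ℕ → Finset α) (hC : ∀ i < t, t ≤ (C i).card) :
    ∃ g : ℕ → α, (∀ i < t, g i ∈ C i) ∧ Set.InjOn g (Set.Iio t) := by
  suffices h : ∀ k, k ≤ t → ∃ g : ℕ → α, (∀ i < k, g i ∈ C i) ∧ Set.InjOn g (Set.Iio k) by
    exact h t le_rfl
  intro k
  induction k with
  | zero =>
    intro _
    exact ⟨fun _ => Classical.arbitrary α, fun i hi => absurd hi (by omega),
      fun x hx => by simp at hx⟩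
  | succ k ih =>
    intro hk
    obtain ⟨g, hg1, hg2⟩ := ih (by omega)
    have h3 := Finset.le_card_sdiff ((Finset.range k).image g) (C k)
    have hcard : 1 ≤ ((C k) \ ((Finset.range k).image g)).card := by
      have h1 := hC k (by omega)
      have h2 : ((Finset.range k).image g).card ≤ k :=
        le_trans Finset.card_image_le (by simp)
      omega
    have hpos : 0 < ((C k) \ ((Finset.range k).image g)).card := hcard
    obtain ⟨a, ha⟩ := Finset.card_pos.mp hpos
    rw [Finset.mem_sdiff] at ha
    refine ⟨Function.update g k a, ?_, ?_⟩
    · intro i hi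
      rcases Nat.lt_succ_iff_lt_or_eq.mp hi with h | h
      · rw [Function.update_of_ne (by omega)]; exact hg1 i h
      · subst h; rw [Function.update_self]; exact ha.1
    · intro x hx y hy hxy
      simp only [Set.mem_Iio] at hx hy
      rcases Nat.lt_succ_iff_lt_or_eq.mp hx with h1 | h1 <;>
        rcases Nat.lt_succ_iff_lt_or_eq.mp hy with h2 | h2
      · rw [Function.update_of_ne (by omega), Function.update_of_ne (by omega)] at hxy
        exact hg2 (Set.mem_Iio.mpr h1) (Set.mem_Iio.mpr h2) hxy
      · subst h2; rw [Function.update_of_ne (by omega), Function.update_self] at hxy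
        exact absurd (Finset.mem_image.mpr ⟨x, Finset.mem_range.mpr h1, hxy⟩) ha.2
      · subst h1; rw [Function.update_self, Function.update_of_ne (by omega)] at hxy
        exact absurd (Finset.mem_image.mpr ⟨y, Finset.mem_range.mpr h2, hxy.symm⟩) ha.2
      · omega

/-- If `H` is an `n`-vertex linear hypergraph and `e₁, …, e₂ₜ` (with `t = e(H) - n`) are
distinct pairwise intersecting edges such that `{e₍₂ᵢ₋₁₎, e₍₂ᵢ₎}` is a useful pair for each
`i`, then `H` has a proper edge-colouring with `n` colours in which each colour is used at
most twice. -/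
theorem colouring_from_useful_pairs
    (n : ℕ) (H : Finset (Finset (Fin n)))
    (hne : ∀ e ∈ H, e.Nonempty) (hlin : LinearHG H)
    (es : Fin (2 * (H.card - n)) → Finset (Fin n))
    (hmem : ∀ i, es i ∈ H)
    (hinj : Function.Injective es)
    (hint : ∀ i j, i ≠ j → (es i ∩ es j).Nonempty)
    (huse : ∀ i : Fin (H.card - n),
      Useful H (es ⟨2 * i.val, by omega⟩) (es ⟨2 * i.val + 1, by omega⟩)) :
    ∃ φ : Finset (Fin n) → ℕ,
      (∀ e ∈ H, φ e < n) ∧ IsProperEC H φ ∧ ColoursUsedAtMostTwice H φ := by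
  classical
  set P := Finset.image es Finset.univ with hP
  have hPH : P ⊆ H := by
    intro x hx
    obtain ⟨j, _, rfl⟩ := Finset.mem_image.mp hx
    exact hmem j
  have hPcard : P.card = 2 * (H.card - n) := by
    rw [hP, Finset.card_image_of_injective _ hinj, Finset.card_univ, Fintype.card_fin]
  have h2t : 2 * (H.card - n) ≤ H.card := hPcard ▸ Finset.card_le_card hPH
  set Q := H \ P with hQ
  have hQcard : Q.card = H.card - 2 * (H.card - n) := by rw [hQ, Finset.card_sdiff_of_subset hPH, hPcard]
  set colQ : Finset (Fin n) → ℕ :=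
    fun x => if h : x ∈ Q then ((Q.equivFin) ⟨x, h⟩ : Fin Q.card).val else 0 with hcolQ
  have hcolQlt : ∀ x ∈ Q, colQ x < Q.card := by
    intro x hx
    simp only [hcolQ, dif_pos hx]
    exact (Q.equivFin ⟨x, hx⟩).isLt
  have hcolQinj : ∀ x ∈ Q, ∀ y ∈ Q, colQ x = colQ y → x = y := by
    intro x hx y hy hxy
    simp only [hcolQ, dif_pos hx, dif_pos hy] at hxy
    have := Q.equivFin.injective (Fin.val_injective hxy)
    exact Subtype.mk_eq_mk.mp this
  set E : ℕ → Finset (Fin n) := fun j => if h : j < 2 * (H.card - n) then es ⟨j, h⟩ else ∅ with hE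
  have hEeq : ∀ (j : ℕ) (hj : j < 2 * (H.card - n)), E j = es ⟨j, hj⟩ := fun j hj => dif_pos hj
  have hEP : ∀ j, j < 2 * (H.card - n) → E j ∈ P := by
    intro j hj
    rw [hEeq j hj]
    exact Finset.mem_image_of_mem es (Finset.mem_univ _)
  have hEH : ∀ j, j < 2 * (H.card - n) → E j ∈ H := fun j hj => hPH (hEP j hj)
  have hEinj : ∀ j, j < 2*(H.card - n) → ∀ j', j' < 2*(H.card - n) → E j = E j' → j = j' := by
    intro j hj j' hj' h
    rw [hEeq j hj, hEeq j' hj'] at h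
    exact Fin.mk.inj_iff.mp (hinj h)
  -- candidate sets
  set C : ℕ → Finset (Finset (Fin n)) :=
    fun i => Q.filter (fun g => g ∩ E (2*i) = ∅ ∨ g ∩ E (2*i+1) = ∅) with hCdef
  have hC : ∀ i, i < (H.card - n) → (H.card - n) ≤ (C i).card := by
    intro i hi
    have h2i : 2*i < 2*(H.card - n) := by omega
    have h2i1 : 2*i+1 < 2*(H.card - n) := by omega
    have hu : Useful H (E (2*i)) (E (2*i+1)) := by
      rw [hEeq _ h2i, hEeq _ h2i1]
      exact huse ⟨i, hi⟩
    unfold Useful at hu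
    obtain ⟨hef, hefint, hcn⟩ := hu
    have heH := hEH _ h2i
    have hfH := hEH _ h2i1
    set D := (H.erase (E (2*i))).erase (E (2*i+1)) with hD
    have hd1 : (H.erase (E (2*i))).card = H.card - 1 := Finset.card_erase_of_mem heH
    have hd0 : E (2*i+1) ∈ H.erase (E (2*i)) := Finset.mem_erase.mpr ⟨hef.symm, hfH⟩
    have hd2 : D.card = (H.erase (E (2*i))).card - 1 := Finset.card_erase_of_mem hd0
    have hH2 : 2 ≤ H.card := Finset.one_lt_card.mpr ⟨_, heH, _, hfH, hef⟩
    have hsub : CommonNbrs H (E (2*i)) (E (2*i+1)) ⊆ D := by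
      intro x hx
      unfold CommonNbrs at hx
      rw [Finset.mem_filter] at hx
      exact Finset.mem_erase.mpr ⟨hx.2.2.2.1, Finset.mem_erase.mpr ⟨hx.2.1, hx.1⟩⟩
    have hsub2 : D \ CommonNbrs H (E (2*i)) (E (2*i+1)) ⊆ C i := by
      intro x hx
      rw [Finset.mem_sdiff] at hx
      obtain ⟨hxD, hxCN⟩ := hx
      have hxf : x ≠ E (2*i+1) := (Finset.mem_erase.mp hxD).1
      have hxe : x ≠ E (2*i) := (Finset.mem_erase.mp (Finset.mem_erase.mp hxD).2).1
      have hxH : x ∈ H := (Finset.mem_erase.mp (Finset.mem_erase.mp hxD).2).2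
      have hdisj : x ∩ E (2*i) = ∅ ∨ x ∩ E (2*i+1) = ∅ := by
        by_contra hcon
        push_neg at hcon
        refine hxCN ?_
        unfold CommonNbrs
        exact Finset.mem_filter.mpr ⟨hxH, hxe, hcon.1,
          hxf, hcon.2⟩
      have hxQ : x ∈ Q := by
        rw [hQ, Finset.mem_sdiff]
        refine ⟨hxH, fun hxP => ?_⟩
        obtain ⟨j, _, rfl⟩ := Finset.mem_image.mp hxP
        have hj1 : j ≠ ⟨2*i, h2i⟩ := fun h => hxe (by rw [h, hEeq _ h2i])
        have hj2 : j ≠ ⟨2*i+1, h2i1⟩ := fun h => hxf (by rw [h, hEeq _ h2i1])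
        rcases hdisj with h | h
        · have hni : (es j ∩ E (2*i)).Nonempty := by
            rw [hEeq _ h2i]; exact hint j _ hj1
          exact hni.ne_empty h
        · have hni : (es j ∩ E (2*i+1)).Nonempty := by
            rw [hEeq _ h2i1]; exact hint j _ hj2
          exact hni.ne_empty h
      exact Finset.mem_filter.mpr ⟨hxQ, hdisj⟩
    have hcd : (D \ CommonNbrs H (E (2*i)) (E (2*i+1))).card
        = D.card - (CommonNbrs H (E (2*i)) (E (2*i+1))).card := Finset.card_sdiff_of_subset hsub
    have hlt := Finset.card_le_card hsub2
    omega
  obtain ⟨g, hg1, hg2⟩ := exists_injective_choice (H.card - n) C hC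
  have hgQ : ∀ i, i < (H.card - n) → g i ∈ Q := fun i hi => (Finset.mem_filter.mp (hg1 i hi)).1
  have hgd : ∀ i, i < (H.card - n) → g i ∩ E (2*i) = ∅ ∨ g i ∩ E (2*i+1) = ∅ :=
    fun i hi => (Finset.mem_filter.mp (hg1 i hi)).2
  set r : ℕ → Finset (Fin n) := fun i => if g i ∩ E (2*i) = ∅ then E (2*i) else E (2*i+1) with hrdef
  have hrd : ∀ i, i < (H.card - n) → g i ∩ r i = ∅ := by
    intro i hi
    by_cases h : g i ∩ E (2*i) = ∅
    · simp only [hrdef]; rw [if_pos h]; exact h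
    · simp only [hrdef]; rw [if_neg h]
      rcases hgd i hi with h' | h'
      · exact absurd h' h
      · exact h'
  have hror : ∀ i, (r i = E (2*i) ∨ r i = E (2*i+1)) := by
    intro i
    by_cases h : g i ∩ E (2*i) = ∅
    · left; simp only [hrdef]; rw [if_pos h]
    · right; simp only [hrdef]; rw [if_neg h]
  set pc : ℕ → ℕ := fun j => if E j = r (j/2) then colQ (g (j/2)) else Q.card + j/2 with hpc
  set φ : Finset (Fin n) → ℕ := fun x =>
    if hx : x ∈ Q then colQ x
    else if hx2 : x ∈ P then pc (Classical.choose (Finset.mem_image.mp hx2)).val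
    else 0 with hφ
  have hφQ : ∀ x ∈ Q, φ x = colQ x := by
    intro x hx
    simp only [hφ]
    rw [dif_pos hx]
  have hφE : ∀ j, j < 2*(H.card - n) → φ (E j) = pc j := by
    intro j hj
    have hEPj := hEP j hj
    have hEQ : E j ∉ Q := fun h => (Finset.mem_sdiff.mp h).2 hEPj
    simp only [hφ]
    rw [dif_neg hEQ, dif_pos hEPj]
    congr 1
    have hspec := (Classical.choose_spec (Finset.mem_image.mp hEPj)).2
    have hch : Classical.choose (Finset.mem_image.mp hEPj) = ⟨j, hj⟩ :=
      hinj (by rw [hspec, hEeq j hj])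
    rw [hch]
  have hfresh : ∀ i, i < (H.card - n) → Q.card + i < n := by intro i hi; omega
  have hQn : Q.card ≤ n := by omega
  have hpcc : ∀ j, j < 2*(H.card - n) → (E j = r (j/2) ∧ pc j = colQ (g (j/2)))
      ∨ (E j ≠ r (j/2) ∧ pc j = Q.card + j/2) := by
    intro j hj
    by_cases h : E j = r (j/2)
    · exact Or.inl ⟨h, by simp only [hpc]; rw [if_pos h]⟩
    · exact Or.inr ⟨h, by simp only [hpc]; rw [if_neg h]⟩
  have hdecomp : ∀ x, x ∈ H → x ∈ Q ∨ ∃ j, j < 2*(H.card - n) ∧ x = E j := by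
    intro x hx
    by_cases h : x ∈ P
    · obtain ⟨j, _, rfl⟩ := Finset.mem_image.mp h
      exact Or.inr ⟨j.val, j.isLt, by rw [hEeq j.val j.isLt]⟩
    · exact Or.inl (Finset.mem_sdiff.mpr ⟨hx, h⟩)
  have key : ∀ x, x ∈ H → ∀ y, y ∈ H → x ≠ y → φ x = φ y →
      ∃ i, i < (H.card - n) ∧ ((x = g i ∧ y = r i) ∨ (x = r i ∧ y = g i)) := by
    intro x hx y hy hxy hphi
    rcases hdecomp x hx with hxQ | ⟨j, hj, rfl⟩ <;>
      rcases hdecomp y hy with hyQ | ⟨j', hj', rfl⟩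
    · rw [hφQ x hxQ, hφQ y hyQ] at hphi
      exact absurd (hcolQinj x hxQ y hyQ hphi) hxy
    · rw [hφQ x hxQ, hφE j' hj'] at hphi
      rcases hpcc j' hj' with ⟨hre, hv⟩ | ⟨hre, hv⟩ <;> rw [hv] at hphi
      · have hi' : j'/2 < (H.card - n) := by omega
        exact ⟨j'/2, hi', Or.inl ⟨hcolQinj x hxQ _ (hgQ _ hi') hphi, hre⟩⟩
      · have := hcolQlt x hxQ
        exact absurd hphi (by omega)
    · rw [hφE j hj, hφQ y hyQ] at hphi
      rcases hpcc j hj with ⟨hre, hv⟩ | ⟨hre, hv⟩ <;> rw [hv] at hphi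
      · have hi' : j/2 < (H.card - n) := by omega
        exact ⟨j/2, hi', Or.inr ⟨hre, hcolQinj y hyQ _ (hgQ _ hi') hphi.symm⟩⟩
      · have := hcolQlt y hyQ
        exact absurd hphi (by omega)
    · exfalso
      have hjj' : j ≠ j' := fun h => hxy (by rw [h])
      rw [hφE j hj, hφE j' hj'] at hphi
      have hij : j/2 < (H.card - n) := by omega
      have hij' : j'/2 < (H.card - n) := by omega
      rcases hpcc j hj with ⟨hre, hv⟩ | ⟨hre, hv⟩ <;>
        rcases hpcc j' hj' with ⟨hre', hv'⟩ | ⟨hre', hv'⟩ <;> rw [hv, hv'] at hphi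
      · have hg' : g (j/2) = g (j'/2) := hcolQinj _ (hgQ _ hij) _ (hgQ _ hij') hphi
        have hii : j/2 = j'/2 := hg2 (Set.mem_Iio.mpr hij) (Set.mem_Iio.mpr hij') hg'
        have : E j = E j' := by rw [hre, hre', hii]
        exact hjj' (hEinj j hj j' hj' this)
      · have := hcolQlt _ (hgQ (j/2) hij); omega
      · have := hcolQlt _ (hgQ (j'/2) hij'); omega
      · have hii : j/2 = j'/2 := by omega
        have hjj2 : (j = 2*(j/2) ∧ j' = 2*(j/2)+1) ∨ (j = 2*(j/2)+1 ∧ j' = 2*(j/2)) := by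
          omega
        rcases hror (j/2) with h | h
        · rcases hjj2 with ⟨ha, hb⟩ | ⟨ha, hb⟩
          · exact hre (by rw [← ha] at h; exact h.symm)
          · exact hre' (by rw [← hb] at h; rw [← hii]; exact h.symm)
        · rcases hjj2 with ⟨ha, hb⟩ | ⟨ha, hb⟩
          · exact hre' (by rw [← hb] at h; rw [← hii]; exact h.symm)
          · exact hre (by rw [← ha] at h; exact h.symm)
  refine ⟨φ, ?_, ?_, ?_⟩
  · intro e he
    rcases hdecomp e he with hQe | ⟨j, hj, rfl⟩
    · rw [hφQ e hQe]; exact lt_of_lt_of_le (hcolQlt e hQe) hQn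
    · rw [hφE j hj]
      rcases hpcc j hj with ⟨_, hv⟩ | ⟨_, hv⟩ <;> rw [hv]
      · exact lt_of_lt_of_le (hcolQlt _ (hgQ _ (by omega))) hQn
      · exact hfresh _ (by omega)
  · unfold IsProperEC
    intro e he f hf hef hint' heq
    obtain ⟨i, hi, hcase⟩ := key e he f hf hef heq
    have hd := hrd i hi
    rcases hcase with ⟨h1, h2⟩ | ⟨h1, h2⟩
    · rw [h1, h2] at hint'; exact hint'.ne_empty hd
    · rw [h1, h2] at hint'; rw [Finset.inter_comm] at hint'; exact hint'.ne_empty hd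
  · unfold ColoursUsedAtMostTwice
    intro c
    by_contra hcon
    push_neg at hcon
    obtain ⟨x, hxmem, y, hymem, z, hzmem, hxy, hxz, hyz⟩ := Finset.two_lt_card.mp hcon
    obtain ⟨hxH, hxc⟩ := Finset.mem_filter.mp hxmem
    obtain ⟨hyH, hyc⟩ := Finset.mem_filter.mp hymem
    obtain ⟨hzH, hzc⟩ := Finset.mem_filter.mp hzmem
    obtain ⟨i1, hi1, hc1⟩ := key x hxH y hyH hxy (by rw [hxc, hyc])
    obtain ⟨i2, hi2, hc2⟩ := key x hxH z hzH hxz (by rw [hxc, hzc])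
    have hgP : ∀ i, i < (H.card - n) → g i ∉ P := fun i hi => (Finset.mem_sdiff.mp (hgQ i hi)).2
    have hrP : ∀ i, i < (H.card - n) → r i ∈ P := by
      intro i hi
      rcases hror i with h | h <;> rw [h]
      · exact hEP _ (by omega)
      · exact hEP _ (by omega)
    rcases hc1 with ⟨hx1, hy1⟩ | ⟨hx1, hy1⟩ <;> rcases hc2 with ⟨hx2, hz2⟩ | ⟨hx2, hz2⟩
    · have hii : i1 = i2 :=
        hg2 (Set.mem_Iio.mpr hi1) (Set.mem_Iio.mpr hi2) (hx1.symm.trans hx2)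
      exact hyz (by rw [hy1, hz2, hii])
    · refine hgP i1 hi1 ?_
      rw [← hx1, hx2]; exact hrP i2 hi2
    · refine hgP i2 hi2 ?_
      rw [← hx2, hx1]; exact hrP i1 hi1
    · obtain ⟨i3, hi3, hc3⟩ := key y hyH z hzH hyz (by rw [hyc, hzc])
      rcases hc3 with ⟨hy3, hz3⟩ | ⟨hy3, hz3⟩
      · refine hgP i2 hi2 ?_
        rw [← hz2, hz3]; exact hrP i3 hi3
      · refine hgP i1 hi1 ?_
        rw [← hy1, hy3]; exact hrP i3 hi3
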